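/- Let A ⊆ ℝ² be convex and u, v ∈ A distinct with the segment [u,v] contained in ∂A, and let ℓ be the line through u and v. Then A ∩ ℓ is a face of A, i.e., it is nonempty, convex, and whenever x, y ∈ A and the open segment (x,y) meets A ∩ ℓ, both x and y lie in A ∩ ℓ. -/

import Mathlib

open Set

noncomputable section

/-- `N` is a norm on the real vector space `E`. -/
structure IsNorm {E : Type*} [AddCommGroup E] [Module ℝ E] (N : E → ℝ) : Prop where
  eq_zero_iff : ∀ v : E, N v = 0 ↔ v = 0
  smul_eq : ∀ (c : ℝ) (v : E), N (c • v) = |c| * N v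
  add_le : ∀ u v : E, N (u + v) ≤ N u + N v

/-- Length of the path `φ` on `[a, b]`, with respect to the (norm) function `N`:
the supremum over partitions `a = t 0 ≤ ⋯ ≤ t n = b` of the sums of distances. -/
noncomputable def pathLen {E : Type*} [AddCommGroup E] [Module ℝ E] (N : E → ℝ)
    (φ : ℝ → E) (a b : ℝ) : ENNReal :=
  ⨆ (n : ℕ) (t : Fin (n + 1) → ℝ) (_ : Monotone t) (_ : t 0 = a)
    (_ : t (Fin.last n) = b),
    ∑ i : Fin n, ENNReal.ofReal (N (φ (t i.succ) - φ (t i.castSucc)))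

/-- `φ` is a parametrization of the boundary loop of `B ⊆ ℝ² = ℂ`. -/
def IsBoundaryParam (B : Set ℂ) (φ : ℝ → ℂ) : Prop :=
  Continuous φ ∧ (∀ t : ℝ, φ (t + 1) = φ t) ∧ Set.InjOn φ (Set.Ico 0 1) ∧
    φ '' Set.Ico 0 1 = frontier B

/-- A convex body in the plane: compact, convex, with nonempty interior. -/
def IsConvexBody (B : Set ℂ) : Prop :=
  IsCompact B ∧ Convex ℝ B ∧ (interior B).Nonempty

/-- `C` is a convex arc from `u` to `v`: either the segment `[u, v]`, or a set whose
union with the segment `[v, u]` is the boundary of a convex body (meeting the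
segment only at the endpoints). -/
def IsConvexArc (C : Set ℂ) (u v : ℂ) : Prop :=
  u ∈ C ∧ v ∈ C ∧
    (C = segment ℝ u v ∨
      ∃ B : Set ℂ, IsConvexBody B ∧ C ∪ segment ℝ v u = frontier B ∧
        C ∩ segment ℝ v u = {u, v})

/-- `φ` is a convex path from `u` to `v`, parametrized on `[0, 1]`. -/
def IsConvexPath (φ : ℝ → ℂ) (u v : ℂ) : Prop :=
  Continuous φ ∧ φ 0 = u ∧ φ 1 = v ∧ Set.InjOn φ (Set.Icc 0 1) ∧
    IsConvexArc (φ '' Set.Icc 0 1) u v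

/-- If a segment `[u, v]` with `u ≠ v` lies in the boundary of a convex set `A`,
then the intersection of `A` with the line through `u` and `v` is a face of `A`. -/
theorem stmt14 (A : Set ℂ) (hA : Convex ℝ A) (u v : ℂ) (hu : u ∈ A) (hv : v ∈ A)
    (huv : u ≠ v) (hseg : segment ℝ u v ⊆ frontier A) :
    (A ∩ {p : ℂ | ∃ t : ℝ, p = u + t • (v - u)}).Nonempty ∧
    Convex ℝ (A ∩ {p : ℂ | ∃ t : ℝ, p = u + t • (v - u)}) ∧
    ∀ x ∈ A, ∀ y ∈ A,
      (openSegment ℝ x y ∩ (A ∩ {p : ℂ | ∃ t : ℝ, p = u + t • (v - u)})).Nonempty →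
        x ∈ A ∩ {p : ℂ | ∃ t : ℝ, p = u + t • (v - u)} ∧
        y ∈ A ∩ {p : ℂ | ∃ t : ℝ, p = u + t • (v - u)} := by

  set d : ℂ := v - u with hd
  have hd0 : d ≠ 0 := sub_ne_zero.mpr huv.symm
  set L : Set ℂ := {p : ℂ | ∃ t : ℝ, p = u + t • d} with hL
  have hspan : ∀ p : ℂ, p - u ∈ Submodule.span ℝ ({d} : Set ℂ) → p ∈ L := by
    intro p hp
    rw [Submodule.mem_span_singleton] at hp
    obtain ⟨t, ht⟩ := hp
    exact ⟨t, by rw [ht]; ring⟩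
  have hLconv : Convex ℝ L := by
    rintro p ⟨s, hp⟩ q ⟨t, hq⟩ a b _ _ hab
    refine ⟨a * s + b * t, ?_⟩
    subst hp hq
    have hab' : (a : ℂ) + (b : ℂ) = 1 := by exact_mod_cast hab
    simp only [Complex.real_smul, Complex.ofReal_add, Complex.ofReal_mul]
    linear_combination u * hab'
  have huL : u ∈ L := ⟨0, by simp⟩
  have hvL : v ∈ L := ⟨1, by simp [hd]⟩
  refine ⟨⟨u, hu, huL⟩, hA.inter hLconv, ?_⟩
  by_cases hint : (interior A).Nonempty
  · -- supporting hyperplane at the midpoint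
    set m : ℂ := midpoint ℝ u v with hm
    have hmfr : m ∈ frontier A := hseg (midpoint_mem_segment u v)
    have hmni : m ∉ interior A := fun h => hmfr.2 h
    obtain ⟨f, hf⟩ := geometric_hahn_banach_open_point (hA.interior) isOpen_interior hmni
    obtain ⟨z, hz⟩ := hint
    have hzlt : f z < f m := hf z hz
    have hfA : ∀ a ∈ A, f a ≤ f m := by
      intro a haA
      by_contra h
      push_neg at h
      have hε : 0 < f a - f m := by linarith
      have hdz : 0 < f a - f z := by linarith
      set b : ℝ := min 1 ((f a - f m) / (f a - f z)) with hbdef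
      have hb0 : 0 < b := lt_min one_pos (div_pos hε hdz)
      have hb1 : b ≤ 1 := min_le_left _ _
      have hcomb : (1 - b) • a + b • z ∈ interior A :=
        hA.combo_self_interior_mem_interior haA hz (by linarith) hb0 (by ring)
      have hlt := hf _ hcomb
      rw [map_add, map_smul, map_smul, smul_eq_mul, smul_eq_mul] at hlt
      have hble : b * (f a - f z) ≤ f a - f m := by
        have h1 : b ≤ (f a - f m) / (f a - f z) := min_le_right _ _
        calc b * (f a - f z) ≤ ((f a - f m) / (f a - f z)) * (f a - f z) :=
              mul_le_mul_of_nonneg_right h1 hdz.le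
          _ = f a - f m := div_mul_cancel₀ _ (ne_of_gt hdz)
      nlinarith
    have hfu : f u = f m ∧ f v = f m := by
      have h1 : f u ≤ f m := hfA u hu
      have h2 : f v ≤ f m := hfA v hv
      have h3 : f m = (f u + f v) / 2 := by
        rw [hm, midpoint_eq_smul_add, map_smul]
        rw [map_add]
        simp only [smul_eq_mul, invOf_eq_inv]
        ring
      constructor <;> linarith
    have hfd : f d = 0 := by
      have : f v - f u = 0 := by rw [hfu.1, hfu.2]; ring
      rw [hd, map_sub]; exact this
    have hx0 : f (z - m) ≠ 0 := by
      rw [map_sub]; intro h; linarith [sub_eq_zero.mp h]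
    have hker : (LinearMap.ker (f : ℂ →ₗ[ℝ] ℝ)) = Submodule.span ℝ ({d} : Set ℂ) := by
      symm
      apply Submodule.eq_of_le_of_finrank_eq
      · rw [Submodule.span_le, Set.singleton_subset_iff]
        exact hfd
      · rw [finrank_span_singleton hd0]
        have h1 := LinearMap.finrank_range_add_finrank_ker (f : ℂ →ₗ[ℝ] ℝ)
        have h2 : LinearMap.range (f : ℂ →ₗ[ℝ] ℝ) = ⊤ := by
          rw [LinearMap.range_eq_top]
          intro r
          refine ⟨(r / f (z - m)) • (z - m), ?_⟩
          simp only [LinearMap.map_smul, smul_eq_mul, ContinuousLinearMap.coe_coe]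
          rw [div_mul_eq_mul_div, mul_div_assoc, div_self (by simpa [map_sub] using hx0), mul_one]
        rw [h2, finrank_top, Module.finrank_self, Complex.finrank_real_complex] at h1
        omega
    have hLlevel : ∀ p : ℂ, f p = f m → p ∈ L := by
      intro p hp
      apply hspan
      rw [← hker]
      simp only [LinearMap.mem_ker, ContinuousLinearMap.coe_coe, map_sub]
      rw [hp, hfu.1]; ring
    rintro x hx y hy ⟨w, hw1, hw2, t, hwt⟩
    obtain ⟨a, b, ha, hb, hab, hwab⟩ := hw1
    have hfw : f w = f m := by
      rw [hwt]
      simp only [map_add, map_smul, hfd, smul_eq_mul, mul_zero, add_zero, hfu.1]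
    have hfx : f x = f m := by
      by_contra h
      have hx' : f x < f m := lt_of_le_of_ne (hfA x hx) h
      have hy' : f y ≤ f m := hfA y hy
      have hc : f w < f m := by
        rw [← hwab, map_add, map_smul, map_smul, smul_eq_mul, smul_eq_mul]
        have hsum : a * f m + b * f m = f m := by rw [← add_mul, hab, one_mul]
        linarith [mul_lt_mul_of_pos_left hx' ha, mul_le_mul_of_nonneg_left hy' hb.le]
      linarith [hfw ▸ hc]
    have hfy : f y = f m := by
      by_contra h
      have hy' : f y < f m := lt_of_le_of_ne (hfA y hy) h
      have hx' : f x ≤ f m := hfA x hx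
      have hc : f w < f m := by
        rw [← hwab, map_add, map_smul, map_smul, smul_eq_mul, smul_eq_mul]
        have hsum : a * f m + b * f m = f m := by rw [← add_mul, hab, one_mul]
        linarith [mul_lt_mul_of_pos_left hy' hb, mul_le_mul_of_nonneg_left hx' ha.le]
      linarith [hfw ▸ hc]
    exact ⟨⟨hx, hLlevel x hfx⟩, ⟨hy, hLlevel y hfy⟩⟩
  · -- interior empty: A lies in the line
    have hAL : A ⊆ L := by
      have hspan_ne : affineSpan ℝ A ≠ ⊤ := by
        intro h
        rw [← hA.interior_nonempty_iff_affineSpan_eq_top] at h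
        exact hint h
      have hAne : A.Nonempty := ⟨u, hu⟩
      set V : Submodule ℝ ℂ := (affineSpan ℝ A).direction with hV
      have hVne : V ≠ ⊤ := by
        intro h
        apply hspan_ne
        rw [← AffineSubspace.direction_eq_top_iff_of_nonempty
          ((affineSpan_nonempty (k := ℝ) (s := A)).mpr hAne)]
        exact h
      have hVlt : Module.finrank ℝ V < 2 := by
        have := Submodule.finrank_lt (V := ℂ) hVne
        rwa [Complex.finrank_real_complex] at this
      have hdV : d ∈ V := by
        have h1 : u ∈ affineSpan ℝ A := subset_affineSpan ℝ A hu
        have h2 : v ∈ affineSpan ℝ A := subset_affineSpan ℝ A hv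
        exact AffineSubspace.vsub_mem_direction h2 h1
      have hVeq : Submodule.span ℝ ({d} : Set ℂ) = V := by
        apply Submodule.eq_of_le_of_finrank_eq
        · rw [Submodule.span_le, Set.singleton_subset_iff]; exact hdV
        · rw [finrank_span_singleton hd0]
          have h1 : 0 < Module.finrank ℝ V := by
            rw [Module.finrank_pos_iff_exists_ne_zero]
            exact ⟨⟨d, hdV⟩, fun h => hd0 (by simpa using congrArg Subtype.val h)⟩
          omega
      intro p hp
      apply hspan
      rw [hVeq]
      exact AffineSubspace.vsub_mem_direction (subset_affineSpan ℝ A hp)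
        (subset_affineSpan ℝ A hu)
    rintro x hx y hy -
    exact ⟨⟨hx, hAL hx⟩, ⟨hy, hAL hy⟩⟩

end
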